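/- Abstract KL finite-length lemma (core argument of Theorems 4.2 and 4.3). Let {x^k} be a sequence in ℝⁿ, {Δ^k} a sequence in ℝⁿ with Σ_{k=0}^∞ ‖Δ^k‖ < ∞, {H_k} a sequence of real numbers, ζ ∈ ℝ, a > 0, b > 0, η > 0, K ≥ 1, and let ψ : [0, η) → [0, ∞) be concave, continuous at 0 with ψ(0) = 0, continuously differentiable on (0, η) with ψ' > 0 on (0, η). Suppose that for all k ≥ K: (i) ζ < H_k < ζ + η; (ii) H_k − H_{k+1} ≥ b·‖x^{k+1} − x^k‖²; (iii) ψ'(H_k − ζ)·(a·‖x^k − x^{k−1}‖ + ‖Δ^{k−1}‖) ≥ 1. Then Σ_{k=0}^∞ ‖x^{k+1} − x^k‖ < ∞, and consequently the sequence {x^k} converges. -/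

import Mathlib

open Filter Topology Bornology RealInnerProductSpace
open scoped Classical

noncomputable section

/-- `ℝⁿ` with the Euclidean inner product. -/
abbrev E (n : ℕ) := EuclideanSpace ℝ (Fin n)

/-- Bregman distance `D_φ(x, y) = φ(x) − φ(y) − ⟨∇φ(y), x − y⟩` associated with the
kernel `φ` whose gradient is `φ'`. -/
def breg {n : ℕ} (φ : E n → ℝ) (φ' : E n → E n) (x y : E n) : ℝ :=
  φ x - φ y - ⟪φ' y, x - y⟫

/-- `ε`-subdifferential at `x` of the extended-real-valued convex function that is equal
to `h` on its domain `S` and `+∞` outside `S`: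
`∂_ε h(x) = {d : h(y) ≥ h(x) + ⟨d, y − x⟩ − ε for all y}` (the inequality being automatic
for `y ∉ S`). -/
def epsSubdiff {n : ℕ} (S : Set (E n)) (h : E n → ℝ) (ε : ℝ) (x : E n) : Set (E n) :=
  {d | ∀ y ∈ S, h x + ⟪d, y - x⟫ - ε ≤ h y}

/-- **Abstract KL finite-length lemma** (core argument of Theorems 4.2 and 4.3). -/
theorem kl_finite_length
    {n : ℕ} (x Δ : ℕ → E n) (H : ℕ → ℝ) (ζ a b η : ℝ) (K : ℕ)
    (ψ ψ' : ℝ → ℝ)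
    (hΔsum : Summable (fun k => ‖Δ k‖))
    (ha : 0 < a) (hb : 0 < b) (hη : 0 < η) (hK : 1 ≤ K)
    -- `ψ : [0, η) → [0, ∞)` is concave, continuous at `0` with `ψ(0) = 0`,
    -- continuously differentiable on `(0, η)` with `ψ' > 0` there
    (hψ0 : ψ 0 = 0)
    (hψnonneg : ∀ t ∈ Set.Ico (0 : ℝ) η, 0 ≤ ψ t)
    (hψconc : ConcaveOn ℝ (Set.Ico (0 : ℝ) η) ψ)
    (hψcont : ContinuousWithinAt ψ (Set.Ico (0 : ℝ) η) 0)
    (hψderiv : ∀ t ∈ Set.Ioo (0 : ℝ) η, HasDerivAt ψ (ψ' t) t)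
    (hψ'cont : ContinuousOn ψ' (Set.Ioo (0 : ℝ) η))
    (hψ'pos : ∀ t ∈ Set.Ioo (0 : ℝ) η, 0 < ψ' t)
    -- the three properties for `k ≥ K`
    (h1 : ∀ k, K ≤ k → ζ < H k ∧ H k < ζ + η)
    (h2 : ∀ k, K ≤ k → b * ‖x (k + 1) - x k‖ ^ 2 ≤ H k - H (k + 1))
    (h3 : ∀ k, K ≤ k → 1 ≤ ψ' (H k - ζ) * (a * ‖x k - x (k - 1)‖ + ‖Δ (k - 1)‖)) :
    Summable (fun k => ‖x (k + 1) - x k‖) ∧ ∃ xs, Tendsto x atTop (𝓝 xs) := by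
  set d : ℕ → ℝ := fun k => ‖x (k + 1) - x k‖ with hd
  have hdnn : ∀ k, 0 ≤ d k := fun k => norm_nonneg _
  -- membership of the values H k - ζ in (0, η) for k ≥ K
  have hmem : ∀ k, K ≤ k → H k - ζ ∈ Set.Ioo (0 : ℝ) η := by
    intro k hk
    obtain ⟨hl, hr⟩ := h1 k hk
    exact ⟨by linarith, by linarith⟩
  -- nonnegativity of ψ at those points
  have hψnn : ∀ k, K ≤ k → 0 ≤ ψ (H k - ζ) := fun k hk =>
    hψnonneg _ ⟨(hmem k hk).1.le, (hmem k hk).2⟩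
  -- key per-step inequality
  have key : ∀ k, K ≤ k →
      2 * d k ≤ d (k - 1) + (a / b) * (ψ (H k - ζ) - ψ (H (k + 1) - ζ)) + ‖Δ (k - 1)‖ / a := by
    intro k hk
    have hk1 : K ≤ k + 1 := hk.trans (Nat.le_succ k)
    set t := H k - ζ with hts
    set s := H (k + 1) - ζ with hss
    have htI : t ∈ Set.Ioo (0 : ℝ) η := hmem k hk
    have hsI : s ∈ Set.Ioo (0 : ℝ) η := hmem (k + 1) hk1
    have h2' : b * d k ^ 2 ≤ t - s := by
      have := h2 k hk; simp only [hd]; linarith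
    have hψ't : 0 < ψ' t := hψ'pos t htI
    have hts0 : 0 ≤ t - s := le_trans (by positivity) h2'
    -- concavity tangent inequality
    have tangent : ψ' t * (t - s) ≤ ψ t - ψ s := by
      rcases eq_or_lt_of_le (by linarith : s ≤ t) with h | h
      · rw [h]; simp
      · have hconv : ConvexOn ℝ (Set.Ico (0 : ℝ) η) (-ψ) := hψconc.neg
        have hder : HasDerivAt (-ψ) (-ψ' t) t := (hψderiv t htI).neg
        have := hconv.slope_le_of_hasDerivAt
          ⟨hsI.1.le, hsI.2⟩ ⟨htI.1.le, htI.2⟩ h hder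
        rw [slope_def_field] at this
        simp only [Pi.neg_apply] at this
        rw [div_le_iff₀ (by linarith : (0:ℝ) < t - s)] at this
        nlinarith
    have hΔψ : 0 ≤ ψ t - ψ s := le_trans (mul_nonneg hψ't.le hts0) tangent
    have h3' := h3 k hk
    have hxk : ‖x k - x (k - 1)‖ = d (k - 1) := by
      have hk' : k - 1 + 1 = k := by omega
      simp only [hd, hk']
    rw [hxk] at h3'
    set δ := ‖Δ (k - 1)‖ with hδ
    have hδnn : 0 ≤ δ := norm_nonneg _
    have hA : 0 ≤ a * d (k - 1) + δ := by positivity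
    -- b d_k² ≤ (ψ t - ψ s)(a d_{k-1} + δ)
    have step1 : b * d k ^ 2 ≤ (ψ t - ψ s) * (a * d (k - 1) + δ) := by
      have s1 : b * d k ^ 2 ≤ b * d k ^ 2 * (ψ' t * (a * d (k - 1) + δ)) :=
        le_mul_of_one_le_right (by positivity) h3'
      have s3 : ψ' t * (b * d k ^ 2) ≤ ψ' t * (t - s) :=
        mul_le_mul_of_nonneg_left h2' hψ't.le
      have s5 : (ψ' t * (b * d k ^ 2)) * (a * d (k - 1) + δ)
          ≤ (ψ t - ψ s) * (a * d (k - 1) + δ) :=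
        mul_le_mul_of_nonneg_right (s3.trans tangent) hA
      calc b * d k ^ 2 ≤ b * d k ^ 2 * (ψ' t * (a * d (k - 1) + δ)) := s1
        _ = (ψ' t * (b * d k ^ 2)) * (a * d (k - 1) + δ) := by ring
        _ ≤ (ψ t - ψ s) * (a * d (k - 1) + δ) := s5
    set u := (a / b) * (ψ t - ψ s) with hu
    set v := d (k - 1) + δ / a with hv
    have hunn : 0 ≤ u := by positivity
    have hvnn : 0 ≤ v := by positivity
    have step2 : d k ^ 2 ≤ u * v := by
      have huv : u * v = (ψ t - ψ s) * (a * d (k - 1) + δ) / b := by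
        rw [hu, hv]; field_simp [ha.ne', hb.ne']
      rw [huv, le_div_iff₀ hb]
      linarith
    have hamgm : 2 * d k ≤ u + v := by
      nlinarith [sq_nonneg (u - v), sq_nonneg (u + v - 2 * d k), hdnn k,
        mul_nonneg hunn hvnn]
    simp only [hu, hv] at hamgm
    linarith
  -- bound on shifted Δ-sums
  have hT : (0:ℝ) ≤ ∑' k, ‖Δ k‖ := tsum_nonneg fun k => norm_nonneg _
  have hΔbound : ∀ N, ∑ k ∈ Finset.Ico K N, ‖Δ (k - 1)‖ ≤ ∑' k, ‖Δ k‖ := by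
    intro N
    have hinj : ∀ i ∈ Finset.Ico K N, ∀ j ∈ Finset.Ico K N, i - 1 = j - 1 → i = j := by
      intro i hi j hj hij
      simp only [Finset.mem_Ico] at hi hj
      omega
    calc ∑ k ∈ Finset.Ico K N, ‖Δ (k - 1)‖
        = ∑ j ∈ (Finset.Ico K N).image (fun k => k - 1), ‖Δ j‖ :=
          (Finset.sum_image (f := fun j => ‖Δ j‖) (g := fun k => k - 1) hinj).symm
      _ ≤ ∑' k, ‖Δ k‖ := Summable.sum_le_tsum _ (fun _ _ => norm_nonneg _) hΔsum
  -- telescoping invariant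
  have inv : ∀ N, K ≤ N →
      (∑ k ∈ Finset.Ico K N, d k) + d (N - 1) + (a / b) * ψ (H N - ζ)
        ≤ d (K - 1) + (a / b) * ψ (H K - ζ)
          + (1 / a) * ∑ k ∈ Finset.Ico K N, ‖Δ (k - 1)‖ := by
    intro N hN
    induction N with
    | zero => omega
    | succ N ih =>
      rcases eq_or_lt_of_le hN with h | h
      · rw [← h]; simp
      · have hKN : K ≤ N := by omega
        have ih' := ih hKN
        have hkey := key N hKN
        have hsum1 : ∑ k ∈ Finset.Ico K (N + 1), d k
            = (∑ k ∈ Finset.Ico K N, d k) + d N := Finset.sum_Ico_succ_top hKN _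
        have hsum2 : ∑ k ∈ Finset.Ico K (N + 1), ‖Δ (k - 1)‖
            = (∑ k ∈ Finset.Ico K N, ‖Δ (k - 1)‖) + ‖Δ (N - 1)‖ :=
          Finset.sum_Ico_succ_top hKN _
        have hN1 : N + 1 - 1 = N := by omega
        rw [hsum1, hsum2, hN1]
        have hδa : ‖Δ (N - 1)‖ / a = (1 / a) * ‖Δ (N - 1)‖ := by ring
        rw [hδa] at hkey
        linarith
  -- uniform bound on partial sums
  set C : ℝ := (∑ k ∈ Finset.range K, d k) + d (K - 1) + (a / b) * ψ (H K - ζ)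
      + (1 / a) * ∑' k, ‖Δ k‖ with hC
  have hψKnn : 0 ≤ (a / b) * ψ (H K - ζ) := mul_nonneg (by positivity) (hψnn K le_rfl)
  have hbound : ∀ N, ∑ k ∈ Finset.range N, d k ≤ C := by
    intro N
    rcases le_total N K with h | h
    · have := Finset.sum_le_sum_of_subset_of_nonneg (Finset.range_subset_range.2 h)
        (fun i _ _ => hdnn i)
      have h1a : (0:ℝ) ≤ (1 / a) * ∑' k, ‖Δ k‖ := by positivity
      calc ∑ k ∈ Finset.range N, d k ≤ ∑ k ∈ Finset.range K, d k := this
        _ ≤ C := by rw [hC]; linarith [hdnn (K - 1)]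
    · have hsplit : ∑ k ∈ Finset.range N, d k
          = (∑ k ∈ Finset.range K, d k) + ∑ k ∈ Finset.Ico K N, d k := by
        rw [Finset.range_eq_Ico,
          ← Finset.sum_Ico_consecutive _ (Nat.zero_le K) h, Finset.range_eq_Ico]
      have hinv := inv N h
      have hΔb := hΔbound N
      have hΔb' : (1 / a) * ∑ k ∈ Finset.Ico K N, ‖Δ (k - 1)‖
          ≤ (1 / a) * ∑' k, ‖Δ k‖ := by
        apply mul_le_mul_of_nonneg_left hΔb (by positivity)
      have hψNnn : 0 ≤ (a / b) * ψ (H N - ζ) :=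
        mul_nonneg (by positivity) (hψnn N h)
      rw [hsplit, hC]
      linarith [hdnn (N - 1)]
  have hsummable : Summable d := summable_of_sum_range_le hdnn hbound
  refine ⟨hsummable, ?_⟩
  -- convergence from finite length
  have hvec : Summable (fun k => x (k + 1) - x k) := Summable.of_norm hsummable
  have htend := hvec.hasSum.tendsto_sum_nat
  have heq : ∀ N, ∑ i ∈ Finset.range N, (x (i + 1) - x i) = x N - x 0 := fun N =>
    Finset.sum_range_sub x N
  rw [tendsto_congr heq] at htend
  refine ⟨(∑' k, (x (k + 1) - x k)) + x 0, ?_⟩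
  have := htend.add (tendsto_const_nhds (x := x 0))
  simpa using this
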